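/- (QUBO to maximum cut) For every n∈ℕ and every matrix Q∈ℚ^{n×n}, there exist a constant c∈ℚ and edge weights w on the complete graph K with vertex set {0,1,…,n} such that for every x∈{0,1}^n: x^T Q x = c − w(δ({i∈{1,…,n} : x_i = 1})), where δ is the edge cut in K. Consequently, min_{x∈{0,1}^n} x^T Q x = c − max_{S⊆{1,…,n}} w(δ(S)), and the latter maximum equals the maximum cut weight of (K,w). -/

import Mathlib

variable {V : Type*}

/-- `e` is an edge of `G` that crosses the cut induced by the vertex set `U`,
i.e. `e ∈ δ(U) := {{u,v} ∈ E : u ∈ U, v ∉ U}`. -/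
def inCutSet (G : SimpleGraph V) (U : Set V) (e : Sym2 V) : Prop :=
  e ∈ G.edgeSet ∧ (∃ u ∈ e, u ∈ U) ∧ ∃ v ∈ e, v ∉ U

/-- The edge cut `δ(U)` as a finset. -/
noncomputable def cutFinset [Fintype V] (G : SimpleGraph V) (U : Set V) :
    Finset (Sym2 V) := by
  classical
  exact Finset.univ.filter (inCutSet G U)

/-- The weight `w(δ(U))` of the cut induced by `U`. -/
noncomputable def cutWeight [Fintype V] (G : SimpleGraph V) (w : Sym2 V → ℚ) (U : Set V) : ℚ :=
  ∑ e ∈ cutFinset G U, w e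

/-- The QUBO objective `x^T Q x` for a `{0,1}`-vector encoded as `x : Fin n → Bool`. -/
def quboVal (n : ℕ) (Q : Matrix (Fin n) (Fin n) ℚ) (x : Fin n → Bool) : ℚ :=
  ∑ i, ∑ j, (if x i then (1 : ℚ) else 0) * Q i j * (if x j then (1 : ℚ) else 0)

open Classical in
noncomputable def crossInd (U : Set V) (u v : V) : ℚ :=
  if (u ∈ U ∧ v ∉ U) ∨ (v ∈ U ∧ u ∉ U) then 1 else 0

lemma crossInd_symm (U : Set V) (u v : V) : crossInd U u v = crossInd U v u := by
  classical
  simp only [crossInd]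
  congr 1
  · exact propext or_comm

lemma halfsum (F : V × V → ℚ) [Fintype V] [LinearOrder V]
    (hsymm : ∀ u v, F (u, v) = F (v, u)) (hdiag : ∀ u, F (u, u) = 0) :
    ∑ p ∈ Finset.univ.offDiag with p.1 < p.2, F p = (1/2) * ∑ u, ∑ v, F (u, v) := by
  classical
  have h1 : ∑ u, ∑ v, F (u, v) = ∑ p ∈ Finset.univ ×ˢ Finset.univ, F p := by
    rw [Finset.sum_product]
  have h2 : (Finset.univ.offDiag : Finset (V × V)) =
      (Finset.univ ×ˢ Finset.univ).filter (fun p => p.1 ≠ p.2) := by ext p; simp [Finset.mem_offDiag]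
  have h3 : ∑ p ∈ Finset.univ ×ˢ Finset.univ, F p = ∑ p ∈ Finset.univ.offDiag, F p := by
    rw [h2, Finset.sum_filter_add_sum_filter_not (Finset.univ ×ˢ Finset.univ)
      (fun p => p.1 ≠ p.2) F |>.symm]
    have : ∑ p ∈ (Finset.univ ×ˢ Finset.univ).filter (fun p => ¬ p.1 ≠ p.2), F p = 0 := by
      apply Finset.sum_eq_zero
      intro p hp
      simp only [Finset.mem_filter, not_not] at hp
      obtain ⟨-, h⟩ := hp
      calc F p = F (p.1, p.2) := by rw [Prod.mk.eta]
        _ = F (p.1, p.1) := by rw [h]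
        _ = 0 := hdiag _
    rw [this, add_zero]
  have h4 : ∑ p ∈ Finset.univ.offDiag, F p =
      (∑ p ∈ Finset.univ.offDiag with p.1 < p.2, F p) +
      (∑ p ∈ Finset.univ.offDiag with ¬ p.1 < p.2, F p) :=
    (Finset.sum_filter_add_sum_filter_not _ _ _).symm
  have h5 : ∑ p ∈ Finset.univ.offDiag with ¬ p.1 < p.2, F p =
      ∑ p ∈ Finset.univ.offDiag with p.1 < p.2, F p := by
    apply Finset.sum_nbij' (fun p => (p.2, p.1)) (fun p => (p.2, p.1))
    · rintro ⟨a, b⟩ hp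
      simp only [Finset.mem_filter, Finset.mem_offDiag, Finset.mem_univ, true_and,
        not_lt] at hp ⊢
      exact ⟨hp.1.symm, lt_of_le_of_ne hp.2 hp.1.symm⟩
    · rintro ⟨a, b⟩ hp
      simp only [Finset.mem_filter, Finset.mem_offDiag, Finset.mem_univ, true_and,
        not_lt] at hp ⊢
      exact ⟨hp.1.symm, le_of_lt hp.2⟩
    · rintro ⟨a, b⟩ _; rfl
    · rintro ⟨a, b⟩ _; rfl
    · rintro ⟨a, b⟩ _; exact (hsymm b a).symm
  rw [h1, h3, h4, h5]; ring

lemma lemA [Fintype V] [LinearOrder V] (f : V → V → ℚ) (hf : ∀ u v, f u v = f v u)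
    (U : Set V) :
    cutWeight ⊤ (Sym2.lift ⟨f, hf⟩) U = (1/2) * ∑ u, ∑ v, crossInd U u v * f u v := by
  classical
  have hP : ∀ u v : V, (((∃ a ∈ (s(u,v) : Sym2 V), a ∈ U) ∧ ∃ b ∈ (s(u,v) : Sym2 V), b ∉ U) ↔
      ((u ∈ U ∧ v ∉ U) ∨ (v ∈ U ∧ u ∉ U))) := by
    intro u v
    constructor
    · rintro ⟨⟨a, ha, haU⟩, ⟨b, hb, hbU⟩⟩
      rw [Sym2.mem_iff] at ha hb
      rcases ha with rfl | rfl <;> rcases hb with rfl | rfl <;> tauto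
    · rintro (⟨hu, hv⟩ | ⟨hv, hu⟩)
      · exact ⟨⟨u, by simp, hu⟩, ⟨v, by simp, hv⟩⟩
      · exact ⟨⟨v, by simp, hv⟩, ⟨u, by simp, hu⟩⟩
  have hfilter : (Finset.univ.filter (inCutSet ⊤ U)) =
      ((Finset.univ : Finset (Sym2 V)).filter (fun e => ¬ e.IsDiag)).filter
        (fun e => (∃ a ∈ e, a ∈ U) ∧ ∃ b ∈ e, b ∉ U) := by
    rw [Finset.filter_filter]
    apply Finset.filter_congr
    intro e _
    unfold inCutSet
    rw [SimpleGraph.edgeSet_top]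
    simp only [Set.mem_compl_iff, Sym2.mem_diagSet]
  rw [cutWeight, cutFinset, hfilter, Finset.sum_filter, ← Finset.sym2_univ,
    Finset.sum_sym2_filter_not_isDiag]
  have := halfsum (V := V) (fun p => crossInd U p.1 p.2 * f p.1 p.2)
    (fun u v => by simp only; rw [crossInd_symm, hf]) (fun u => by
      simp only [crossInd, Set.mem_setOf_eq]
      rw [if_neg (by tauto), zero_mul])
  rw [← this]
  apply Finset.sum_congr rfl
  rintro ⟨a, b⟩ hp
  simp only [Sym2.lift_mk]
  rw [crossInd]
  by_cases h : (a ∈ U ∧ b ∉ U) ∨ (b ∈ U ∧ a ∉ U)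
  · rw [if_pos ((hP a b).2 h), if_pos h, one_mul]
  · rw [if_neg (fun hc => h ((hP a b).1 hc)), if_neg h, zero_mul]


section Construction

variable (n : ℕ) (Q : Matrix (Fin n) (Fin n) ℚ)

noncomputable def gmat (i j : Fin n) : ℚ := (Q i j + Q j i) / 2

noncomputable def bvec (i : Fin n) : ℚ := ∑ j, gmat n Q i j

noncomputable def ffun : Fin (n + 1) → Fin (n + 1) → ℚ := fun u v =>
  Fin.cases (Fin.cases 0 (fun j => -(bvec n Q j)) v)
    (fun i => Fin.cases (-(bvec n Q i)) (fun j => gmat n Q i j) v) u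

lemma ffun_00 : ffun n Q 0 0 = 0 := rfl
lemma ffun_0s (j : Fin n) : ffun n Q 0 j.succ = -(bvec n Q j) := by
  simp [ffun]
lemma ffun_s0 (i : Fin n) : ffun n Q i.succ 0 = -(bvec n Q i) := by
  simp [ffun]
lemma ffun_ss (i j : Fin n) : ffun n Q i.succ j.succ = gmat n Q i j := by
  simp [ffun]

lemma ffun_symm : ∀ u v, ffun n Q u v = ffun n Q v u := by
  intro u v
  induction u using Fin.cases with
  | zero => induction v using Fin.cases with
    | zero => rfl
    | succ j => rw [ffun_0s, ffun_s0]
  | succ i => induction v using Fin.cases with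
    | zero => rw [ffun_0s, ffun_s0]
    | succ j => rw [ffun_ss, ffun_ss]; unfold gmat; ring

noncomputable def wfun : Sym2 (Fin (n + 1)) → ℚ := Sym2.lift ⟨ffun n Q, ffun_symm n Q⟩

def cutU (x : Fin n → Bool) : Set (Fin (n + 1)) :=
  {p : Fin (n + 1) | ∃ i : Fin n, x i = true ∧ p = i.succ}

lemma zero_not_mem_cutU (x : Fin n → Bool) : (0 : Fin (n + 1)) ∉ cutU n x := by
  rintro ⟨i, -, h⟩
  exact Fin.succ_ne_zero i h.symm

lemma succ_mem_cutU (x : Fin n → Bool) (i : Fin n) : i.succ ∈ cutU n x ↔ x i = true := by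
  constructor
  · rintro ⟨j, hj, hij⟩
    rwa [Fin.succ_inj.mp hij]
  · intro h; exact ⟨i, h, rfl⟩

lemma part1 (x : Fin n → Bool) :
    quboVal n Q x = 0 - cutWeight (⊤ : SimpleGraph (Fin (n + 1))) (wfun n Q) (cutU n x) := by
  classical
  set χ : Fin n → ℚ := fun i => if x i then (1 : ℚ) else 0 with hχ
  set e : Fin n → Fin n → ℚ := fun i j =>
    if (x i = true ∧ ¬ x j = true) ∨ (x j = true ∧ ¬ x i = true) then (1 : ℚ) else 0 with he
  -- crossInd computations
  have c00 : crossInd (cutU n x) 0 0 = 0 := by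
    simp [crossInd]
  have c0s : ∀ j : Fin n, crossInd (cutU n x) 0 j.succ = χ j := by
    intro j
    simp only [crossInd, zero_not_mem_cutU, succ_mem_cutU, hχ]
    by_cases h : x j = true <;> simp [h, zero_not_mem_cutU]
  have cs0 : ∀ i : Fin n, crossInd (cutU n x) i.succ 0 = χ i := by
    intro i
    rw [crossInd_symm]; exact c0s i
  have css : ∀ i j : Fin n, crossInd (cutU n x) i.succ j.succ = e i j := by
    intro i j
    simp only [crossInd, succ_mem_cutU, he]
  -- the big sum
  have hcut := lemA (ffun n Q) (ffun_symm n Q) (cutU n x)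
  have hbig : ∑ u, ∑ v, crossInd (cutU n x) u v * ffun n Q u v =
      (∑ j, χ j * (-(bvec n Q j))) +
      ∑ i, (χ i * (-(bvec n Q i)) + ∑ j, e i j * gmat n Q i j) := by
    rw [Fin.sum_univ_succ]
    congr 1
    · rw [Fin.sum_univ_succ, c00, ffun_00, mul_zero, zero_add]
      exact Finset.sum_congr rfl fun j _ => by rw [c0s, ffun_0s]
    · refine Finset.sum_congr rfl fun i _ => ?_
      rw [Fin.sum_univ_succ, cs0, ffun_s0]
      congr 1
      exact Finset.sum_congr rfl fun j _ => by rw [css, ffun_ss]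
  -- the algebraic identity
  have key : ∀ i j, χ i * Q i j * χ j + χ j * Q j i * χ i
      = (χ i * gmat n Q i j + χ j * gmat n Q j i)
        - ((1/2) * (e i j * gmat n Q i j) + (1/2) * (e j i * gmat n Q j i)) := by
    intro i j
    by_cases hi : x i = true <;> by_cases hj : x j = true <;>
      simp only [hχ, he, hi, hj, if_pos, if_neg, gmat] <;> simp [hi, hj] <;> ring
  have hswap : ∀ F : Fin n → Fin n → ℚ, ∑ i, ∑ j, F i j = ∑ i, ∑ j, F j i :=
    fun F => Finset.sum_comm
  have main : ∑ i, ∑ j, χ i * Q i j * χ j =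
      (∑ i, χ i * bvec n Q i) - (1/2) * ∑ i, ∑ j, e i j * gmat n Q i j := by
    have h2 : 2 * (∑ i, ∑ j, χ i * Q i j * χ j) =
        ∑ i, ∑ j, (χ i * Q i j * χ j + χ j * Q j i * χ i) := by
      simp only [Finset.sum_add_distrib]
      rw [two_mul]
      congr 1
      exact hswap (fun i j => χ i * Q i j * χ j)
    have h3 : ∑ i, ∑ j, (χ i * Q i j * χ j + χ j * Q j i * χ i) =
        2 * (∑ i, χ i * bvec n Q i) - ∑ i, ∑ j, e i j * gmat n Q i j := by
      calc ∑ i, ∑ j, (χ i * Q i j * χ j + χ j * Q j i * χ i)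
          = ∑ i, ∑ j, ((χ i * gmat n Q i j + χ j * gmat n Q j i)
            - ((1/2) * (e i j * gmat n Q i j) + (1/2) * (e j i * gmat n Q j i))) := by
            exact Finset.sum_congr rfl fun i _ => Finset.sum_congr rfl fun j _ => key i j
        _ = 2 * (∑ i, χ i * bvec n Q i) - ∑ i, ∑ j, e i j * gmat n Q i j := by
            simp only [Finset.sum_sub_distrib, Finset.sum_add_distrib]
            have e1 : ∑ i, ∑ j, χ j * gmat n Q j i = ∑ i, ∑ j, χ i * gmat n Q i j :=
              hswap _
            have e2 : ∑ i, ∑ j, (1/2) * (e j i * gmat n Q j i)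
                = ∑ i, ∑ j, (1/2) * (e i j * gmat n Q i j) := hswap _
            have hb : ∑ i, ∑ j, χ i * gmat n Q i j = ∑ i, χ i * bvec n Q i :=
              Finset.sum_congr rfl fun i _ => (Finset.mul_sum _ _ _).symm
            have hY : ∑ i, ∑ j, (1/2) * (e i j * gmat n Q i j)
                = (1/2) * ∑ i, ∑ j, e i j * gmat n Q i j := by
              simp [Finset.mul_sum]
            rw [e1, e2, hb, hY]
            ring
    linarith [h2, h3]
  have : quboVal n Q x = ∑ i, ∑ j, χ i * Q i j * χ j := rfl
  rw [this, main, zero_sub, wfun, hcut, hbig, Finset.sum_add_distrib]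
  simp only [mul_neg, Finset.sum_neg_distrib]
  ring
end Construction


lemma inCutSet_compl (G : SimpleGraph V) (U : Set V) (e : Sym2 V) :
    inCutSet G Uᶜ e ↔ inCutSet G U e := by
  unfold inCutSet
  simp only [Set.mem_compl_iff, not_not]
  tauto

lemma cutWeight_compl [Fintype V] (G : SimpleGraph V) (w : Sym2 V → ℚ) (U : Set V) :
    cutWeight G w Uᶜ = cutWeight G w U := by
  classical
  unfold cutWeight cutFinset
  congr 1
  exact Finset.filter_congr fun e _ => by
    constructor
    · exact fun h => (inCutSet_compl G U e).mp h
    · exact fun h => (inCutSet_compl G U e).mpr h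

lemma cutU_subset (n : ℕ) (x : Fin n → Bool) :
    cutU n x ⊆ {p : Fin (n + 1) | p ≠ 0} := by
  rintro p ⟨i, -, rfl⟩
  exact Fin.succ_ne_zero i

lemma cutU_eq (n : ℕ) (S : Set (Fin (n + 1))) (hS : S ⊆ {p | p ≠ 0})
    (x : Fin n → Bool) (hx : ∀ i, x i = true ↔ i.succ ∈ S) :
    cutU n x = S := by
  ext p
  constructor
  · rintro ⟨i, hi, rfl⟩
    exact (hx i).mp hi
  · intro hp
    obtain ⟨i, rfl⟩ := Fin.exists_succ_eq.mpr (hS hp)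
    exact ⟨i, (hx i).mpr hp, rfl⟩

theorem stmt16 (n : ℕ) (Q : Matrix (Fin n) (Fin n) ℚ) :
    ∃ (c : ℚ) (w : Sym2 (Fin (n + 1)) → ℚ),
      (∀ x : Fin n → Bool,
        quboVal n Q x =
          c - cutWeight (⊤ : SimpleGraph (Fin (n + 1))) w
                {p : Fin (n + 1) | ∃ i : Fin n, x i = true ∧ p = i.succ}) ∧
      (∀ mq mc : ℚ,
        IsLeast {q | ∃ x : Fin n → Bool, q = quboVal n Q x} mq →
        IsGreatest {q | ∃ S : Set (Fin (n + 1)), S ⊆ {p | p ≠ 0} ∧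
            q = cutWeight (⊤ : SimpleGraph (Fin (n + 1))) w S} mc →
        mq = c - mc) ∧
      (∀ mc mk : ℚ,
        IsGreatest {q | ∃ S : Set (Fin (n + 1)), S ⊆ {p | p ≠ 0} ∧
            q = cutWeight (⊤ : SimpleGraph (Fin (n + 1))) w S} mc →
        IsGreatest {q | ∃ S : Set (Fin (n + 1)),
            q = cutWeight (⊤ : SimpleGraph (Fin (n + 1))) w S} mk →
        mc = mk) := by
  classical
  refine ⟨0, wfun n Q, fun x => part1 n Q x, ?_, ?_⟩
  · rintro mq mc ⟨⟨x₀, hx₀⟩, hqlb⟩ ⟨⟨S, hSsub, hSval⟩, hcub⟩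
    -- mq = -cutWeight (cutU x₀) ≥ -mc
    have h1 : cutWeight ⊤ (wfun n Q) (cutU n x₀) ≤ mc :=
      hcub ⟨cutU n x₀, cutU_subset n x₀, rfl⟩
    have h2 : mq = 0 - cutWeight ⊤ (wfun n Q) (cutU n x₀) := by
      rw [hx₀]; exact part1 n Q x₀
    -- mq ≤ -mc via the x corresponding to S
    set xS : Fin n → Bool := fun i => if i.succ ∈ S then true else false with hxS
    have hx : ∀ i, xS i = true ↔ i.succ ∈ S := by
      intro i
      by_cases h : i.succ ∈ S <;> simp [hxS, h]
    have h3 : quboVal n Q xS = 0 - cutWeight ⊤ (wfun n Q) S := by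
      have := part1 n Q xS
      rwa [cutU_eq n S hSsub xS hx] at this
    have h4 : mq ≤ 0 - mc := by
      have := hqlb ⟨xS, rfl⟩
      rw [h3, ← hSval] at this
      exact this
    linarith
  · rintro mc mk ⟨⟨S, hSsub, hSval⟩, hcub⟩ ⟨⟨T, hTval⟩, hkub⟩
    have h1 : mc ≤ mk := hkub ⟨S, hSval⟩
    have h2 : mk ≤ mc := by
      by_cases h0 : (0 : Fin (n + 1)) ∈ T
      · refine hcub ⟨Tᶜ, ?_, ?_⟩
        · intro p hp
          rintro rfl
          exact hp h0
        · rw [cutWeight_compl, ← hTval]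
      · refine hcub ⟨T, ?_, hTval⟩
        intro p hp
        rintro rfl
        exact h0 hp
    linarith
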